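/- First-order equivalence of normalized and unnormalized updates: let G be an n×k matrix of full column rank, A symmetric, P P ᵀ = G(GᵀG)⁻¹Gᵀ the orthogonal projection onto col(G), and V ∈ ℝ^{n×k} arbitrary. Define M(η) = Vᵀ(G + η(I − GGᵀ)AG)[(G + η(I − GGᵀ)AG)ᵀ(G + η(I − GGᵀ)AG)]⁻¹(G + η(I − GGᵀ)AG)ᵀV. Then the first-order Taylor expansion of M(η) at η = 0 equals VᵀPPᵀV + η(VᵀPPᵀAV + VᵀAPPᵀV − 2VᵀPPᵀAPPᵀV). -/

import Mathlib

open Matrix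

attribute [local instance] Matrix.linftyOpNormedAddCommGroup Matrix.linftyOpNormedRing
  Matrix.linftyOpNormedAlgebra


private lemma mul3_apply {l m o p : Type*} [Fintype m] [Fintype o]
    (P : Matrix l m ℝ) (Q : Matrix m o ℝ) (R : Matrix o p ℝ) (i : l) (j : p) :
    (P * Q * R) i j = ∑ c, ∑ b, P i b * Q b c * R c j := by
  simp only [Matrix.mul_apply, Finset.sum_mul]

theorem unnormalized_update_first_order {n k : ℕ}
    (G : Matrix (Fin n) (Fin k) ℝ) (A : Matrix (Fin n) (Fin n) ℝ)
    (V : Matrix (Fin n) (Fin k) ℝ)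
    (hG : IsUnit (Gᵀ * G)) (hA : A.IsSymm)
    (PP : Matrix (Fin n) (Fin n) ℝ) (hPP : PP = G * (Gᵀ * G)⁻¹ * Gᵀ)
    (X : ℝ → Matrix (Fin n) (Fin k) ℝ)
    (hX : ∀ η, X η = G + η • ((1 - G * Gᵀ) * (A * G)))
    (M : ℝ → Matrix (Fin k) (Fin k) ℝ)
    (hM : ∀ η, M η = Vᵀ * X η * ((X η)ᵀ * X η)⁻¹ * (X η)ᵀ * V) :
    M 0 = Vᵀ * PP * V ∧
      ∀ i j, HasDerivAt (fun η => M η i j)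
        ((Vᵀ * PP * A * V + Vᵀ * A * PP * V
          - (2 : ℝ) • (Vᵀ * PP * A * PP * V)) i j) 0 := by
  -- abbreviations
  set B : Matrix (Fin n) (Fin k) ℝ := (1 - G * Gᵀ) * (A * G) with hB
  set S : Matrix (Fin k) (Fin k) ℝ := Gᵀ * G with hS
  set N : Matrix (Fin k) (Fin k) ℝ := S⁻¹ with hNdef
  set C : Matrix (Fin k) (Fin k) ℝ := Bᵀ * G + Gᵀ * B with hC
  have hdet : IsUnit S.det := (Matrix.isUnit_iff_isUnit_det S).mp hG
  have hNS : N * S = 1 := Matrix.nonsing_inv_mul S hdet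
  have hSN : S * N = 1 := Matrix.mul_nonsing_inv S hdet
  have hX0 : X 0 = G := by rw [hX]; simp
  have hM0 : M 0 = Vᵀ * PP * V := by
    rw [hM, hX0, hPP, ← hS, ← hNdef]
    simp [Matrix.mul_assoc]
  refine ⟨hM0, ?_⟩
  -- the quadratic form of XᵀX
  have hf : ∀ η : ℝ, (X η)ᵀ * X η = S + η • C + (η * η) • (Bᵀ * B) := by
    intro η
    rw [hX η]
    simp only [transpose_add, transpose_smul, Matrix.add_mul, Matrix.mul_add,
      Matrix.smul_mul, Matrix.mul_smul, smul_add, smul_smul, hC, hS]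
    abel
  -- derivative of XᵀX at 0
  have hfd : HasDerivAt (fun η : ℝ => (X η)ᵀ * X η) C 0 := by
    have h1 : HasDerivAt (fun η : ℝ => S + η • C + (η * η) • (Bᵀ * B)) C 0 := by
      have ha : HasDerivAt (fun η : ℝ => S + η • C) C 0 := by
        have h := ((hasDerivAt_id (0:ℝ)).smul_const C).const_add S
        simp only [id, one_smul] at h; exact h
      have hb : HasDerivAt (fun η : ℝ => (η * η) • (Bᵀ * B)) 0 0 := by
        have h := (((hasDerivAt_id (0:ℝ)).mul (hasDerivAt_id 0)).smul_const (Bᵀ * B))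
        simp only [id, mul_one, one_mul, add_zero, zero_smul] at h; exact h
      have h := ha.add hb
      rw [add_zero] at h; exact h
    exact h1.congr_of_eventuallyEq (by filter_upwards with η; rw [hf η])
  -- derivative of the inverse at 0
  have hf0 : (X 0)ᵀ * X 0 = S := by rw [hX0, hS]
  have hg : HasDerivAt (fun η : ℝ => Ring.inverse ((X η)ᵀ * X η)) (-(N * C * N)) 0 := by
    obtain ⟨u, hu⟩ := hG
    have h : HasFDerivAt Ring.inverse
        (-((ContinuousLinearMap.mulLeftRight ℝ (Matrix (Fin k) (Fin k) ℝ)) ↑u⁻¹) ↑u⁻¹)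
        ((X 0)ᵀ * X 0) := by
      rw [hf0, ← hu]; exact hasFDerivAt_ringInverse u
    have h2 := h.comp_hasDerivAt 0 hfd
    have hu' : (↑u : Matrix (Fin k) (Fin k) ℝ) = S := by rw [hu, hS]
    simp [Matrix.coe_units_inv, hu', ContinuousLinearMap.mulLeftRight_apply,
      Matrix.nonsing_inv_eq_ringInverse, hNdef, Function.comp] at h2
    rw [hNdef, Matrix.nonsing_inv_eq_ringInverse]; exact h2
  -- entrywise derivative of the inverse
  have hg0 : Ring.inverse ((X 0)ᵀ * X 0) = N := by
    rw [hf0, hNdef, Matrix.nonsing_inv_eq_ringInverse]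
  have hgbc : ∀ b c, HasDerivAt (fun η : ℝ => Ring.inverse ((X η)ᵀ * X η) b c)
      ((-(N * C * N)) b c) 0 := by
    intro b c
    let L : Matrix (Fin k) (Fin k) ℝ →ₗ[ℝ] ℝ :=
      { toFun := fun W => W b c, map_add' := fun x y => rfl, map_smul' := fun r x => rfl }
    have := (L.toContinuousLinearMap.hasFDerivAt.comp_hasDerivAt 0 hg)
    simp [L, Function.comp] at this; exact this
  intro i j
  -- entrywise formula for M
  have hMe : ∀ η : ℝ, M η i j =
      ∑ c, ∑ b, ((Vᵀ * G) i b + η * ((Vᵀ * B) i b)) * (Ring.inverse ((X η)ᵀ * X η) b c)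
        * ((Gᵀ * V) c j + η * ((Bᵀ * V) c j)) := by
    intro η
    have hP1 : Vᵀ * X η = Vᵀ * G + η • (Vᵀ * B) := by
      rw [hX η, Matrix.mul_add, Matrix.mul_smul]
    have hQ1 : (X η)ᵀ * V = Gᵀ * V + η • (Bᵀ * V) := by
      rw [hX η, transpose_add, transpose_smul, Matrix.add_mul, Matrix.smul_mul]
    rw [hM η, Matrix.nonsing_inv_eq_ringInverse]
    have : Vᵀ * X η * Ring.inverse ((X η)ᵀ * X η) * (X η)ᵀ * V
        = (Vᵀ * G + η • (Vᵀ * B)) * Ring.inverse ((X η)ᵀ * X η) * (Gᵀ * V + η • (Bᵀ * V)) := by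
      rw [← hP1, ← hQ1, Matrix.mul_assoc (Vᵀ * X η * Ring.inverse ((X η)ᵀ * X η))]
    rw [this]
    simp [Matrix.mul_apply, Finset.sum_mul, Finset.mul_sum, Matrix.add_apply, Matrix.smul_apply,
      smul_eq_mul, mul_assoc]
  -- derivative of each entry
  have key : HasDerivAt (fun η => M η i j)
      (((Vᵀ * B) * N * (Gᵀ * V) + (Vᵀ * G) * (-(N * C * N)) * (Gᵀ * V)
        + (Vᵀ * G) * N * (Bᵀ * V)) i j) 0 := by
    have hlin : ∀ (a d : ℝ), HasDerivAt (fun η : ℝ => a + η * d) d 0 := by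
      intro a d; simpa using ((hasDerivAt_id (0:ℝ)).mul_const d).const_add a
    have hsum : HasDerivAt (fun η : ℝ =>
        ∑ c, ∑ b, ((Vᵀ * G) i b + η * ((Vᵀ * B) i b)) * (Ring.inverse ((X η)ᵀ * X η) b c)
          * ((Gᵀ * V) c j + η * ((Bᵀ * V) c j)))
        (∑ c, ∑ b, (((Vᵀ * B) i b * N b c + (Vᵀ * G) i b * ((-(N * C * N)) b c)) * (Gᵀ * V) c j
          + (Vᵀ * G) i b * N b c * ((Bᵀ * V) c j))) 0 := by
      apply HasDerivAt.fun_sum; intro c _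
      apply HasDerivAt.fun_sum; intro b _
      have h := ((hlin ((Vᵀ * G) i b) ((Vᵀ * B) i b)).mul (hgbc b c)).mul
        (hlin ((Gᵀ * V) c j) ((Bᵀ * V) c j))
      have hgv : Ring.inverse ((X 0)ᵀ * X 0) b c = N b c := by rw [hg0]
      simp only [Pi.mul_apply, hgv, zero_mul, add_zero, mul_zero, zero_add] at h; exact h
    have heq : (∑ c, ∑ b, (((Vᵀ * B) i b * N b c + (Vᵀ * G) i b * ((-(N * C * N)) b c)) * (Gᵀ * V) c j
          + (Vᵀ * G) i b * N b c * ((Bᵀ * V) c j)))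
        = ((Vᵀ * B) * N * (Gᵀ * V) + (Vᵀ * G) * (-(N * C * N)) * (Gᵀ * V)
          + (Vᵀ * G) * N * (Bᵀ * V)) i j := by
      simp only [Matrix.add_apply, mul3_apply, add_mul, Finset.sum_add_distrib]
    rw [← heq]
    exact hsum.congr_of_eventuallyEq (by filter_upwards with η; rw [hMe η])
  -- the algebraic identity
  have alg : (Vᵀ * B) * N * (Gᵀ * V) + (Vᵀ * G) * (-(N * C * N)) * (Gᵀ * V)
        + (Vᵀ * G) * N * (Bᵀ * V)
      = Vᵀ * PP * A * V + Vᵀ * A * PP * V - (2 : ℝ) • (Vᵀ * PP * A * PP * V) := by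
    have hBT : Bᵀ = Gᵀ * A * (1 - G * Gᵀ) := by
      rw [hB, transpose_mul, transpose_mul, transpose_sub, transpose_one, transpose_mul,
        transpose_transpose, hA.eq, Matrix.mul_assoc]
    have l3 : N * (Gᵀ * G) = 1 := by rw [← hS]; exact hNS
    have l4 : Gᵀ * (G * N) = 1 := by rw [← Matrix.mul_assoc, ← hS]; exact hSN
    have l1 : ∀ {m : Type} [Fintype m] (x : Matrix (Fin k) m ℝ), N * (Gᵀ * (G * x)) = x := by
      intro m _ x; rw [← Matrix.mul_assoc Gᵀ G x, ← Matrix.mul_assoc, ← hS, hNS, Matrix.one_mul]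
    have l2 : ∀ {m : Type} [Fintype m] (x : Matrix (Fin k) m ℝ), Gᵀ * (G * (N * x)) = x := by
      intro m _ x; rw [← Matrix.mul_assoc Gᵀ G (N * x), ← Matrix.mul_assoc, ← hS, hSN, Matrix.one_mul]
    rw [hPP, hC, hBT, hB, two_smul]
    simp only [Matrix.mul_sub, Matrix.sub_mul, Matrix.mul_add, Matrix.add_mul,
      Matrix.mul_one, Matrix.one_mul, Matrix.mul_assoc, Matrix.neg_mul, Matrix.mul_neg,
      l1, l2, l3, l4]
    abel
  rw [← alg]
  exact key
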